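/- Let u : ℝ → ℝ be a Lipschitz function that is square-integrable on ℝ, and let a < b be real numbers with u(x) = 0 for every x ∈ [a,b]. Denote by u′ the almost-everywhere defined derivative of u, and define N(x) = −∫_ℝ K(x−y)·(u(y)² + u′(y)²/2) dy. If N is not strictly decreasing on [a,b], i.e. there exist a ≤ x₁ < x₂ ≤ b with N(x₂) ≥ N(x₁), then u(x) = 0 for every x ∈ ℝ. -/

import Mathlib

open MeasureTheory Real
open scoped ENNReal NNReal

noncomputable def bbmK (x : ℝ) : ℝ := -Real.sign x * Real.exp (-|x|) / 2

lemma measurable_realSign : Measurable Real.sign := by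
  have : Real.sign = fun r : ℝ => if r < 0 then (-1:ℝ) else if 0 < r then 1 else 0 := by
    funext r; rfl
  rw [this]
  exact Measurable.ite (measurableSet_lt measurable_id measurable_const) measurable_const
    (Measurable.ite (measurableSet_lt measurable_const measurable_id) measurable_const
      measurable_const)

lemma measurable_bbmK : Measurable bbmK :=
  ((measurable_realSign.neg).mul ((measurable_abs.neg).exp)).div_const 2

lemma integrable_exp_neg_abs' : Integrable (fun y : ℝ => Real.exp (-|y|)) := by
  have h1 : IntegrableOn (fun y : ℝ => Real.exp (-|y|)) (Set.Ioi 0) := by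
    refine (exp_neg_integrableOn_Ioi 0 one_pos).congr_fun (fun y hy => ?_) measurableSet_Ioi
    rw [abs_of_pos hy]; simp
  have h2 : IntegrableOn (fun y : ℝ => Real.exp (-|y|)) (Set.Iic 0) := by
    refine (integrableOn_exp_Iic 0).congr_fun (fun y hy => ?_) measurableSet_Iic
    rw [abs_of_nonpos hy, neg_neg]
  have := h2.union h1
  rwa [Set.Iic_union_Ioi, integrableOn_univ] at this

lemma abs_bbmK_le (t : ℝ) : |bbmK t| ≤ Real.exp (-|t|) / 2 := by
  unfold bbmK
  rw [abs_div, abs_of_nonneg (by norm_num : (0:ℝ) ≤ 2), abs_mul, abs_neg,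
    abs_of_pos (Real.exp_pos _)]
  have : |Real.sign t| ≤ 1 := by
    rcases Real.sign_apply_eq t with h | h | h <;> rw [h] <;> norm_num
  have h2 := mul_le_mul_of_nonneg_right this (Real.exp_pos (-|t|)).le
  rw [one_mul] at h2
  linarith

/-- Time-slice unique continuation for the Camassa–Holm equation: let `u` be Lipschitz and
square-integrable, vanishing on `[a,b]`, and set
`N(x) = -∫ K(x-y)(u² + (u')²/2) dy` (which equals `∂ₜu(x,t₀)` on the slice). If `N` is not
strictly decreasing on `[a,b]`, then `u ≡ 0`. -/
theorem camassa_holm_unique_continuation (u : ℝ → ℝ) (L : ℝ≥0)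
    (hLip : LipschitzWith L u) (hL2 : MemLp u 2 (volume : Measure ℝ))
    (a b : ℝ) (hab : a < b) (hz : ∀ x ∈ Set.Icc a b, u x = 0)
    (x₁ x₂ : ℝ) (hx₁ : a ≤ x₁) (hx₁₂ : x₁ < x₂) (hx₂ : x₂ ≤ b)
    (hN : (-∫ y : ℝ, bbmK (x₁ - y) * (u y ^ 2 + (deriv u y) ^ 2 / 2)) ≤
      -∫ y : ℝ, bbmK (x₂ - y) * (u y ^ 2 + (deriv u y) ^ 2 / 2)) :
    ∀ x : ℝ, u x = 0 := by
  set F : ℝ → ℝ := fun y => u y ^ 2 + (deriv u y) ^ 2 / 2 with hF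
  have hFnn : ∀ y, 0 ≤ F y := fun y => by positivity
  -- derivative bound
  have hderiv_le : ∀ y, |deriv u y| ≤ (L : ℝ) := by
    intro y
    have h1 : deriv u y = fderiv ℝ u y 1 := (fderiv_apply_one_eq_deriv (𝕜 := ℝ)).symm
    calc |deriv u y| = ‖fderiv ℝ u y 1‖ := by rw [h1]; rfl
      _ ≤ ‖fderiv ℝ u y‖ * ‖(1:ℝ)‖ := (fderiv ℝ u y).le_opNorm 1
      _ ≤ (L : ℝ) * 1 := by
          rw [norm_one]
          exact mul_le_mul_of_nonneg_right (norm_fderiv_le_of_lipschitz ℝ hLip) zero_le_one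
      _ = (L : ℝ) := mul_one _
  -- measurability
  have hFmeas : AEStronglyMeasurable F volume := by
    have : Measurable F :=
      ((hLip.continuous.measurable).pow_const 2).add
        (((measurable_deriv u).pow_const 2).div_const 2)
    exact this.aestronglyMeasurable
  have husq : Integrable (fun y => u y ^ 2) volume := hL2.integrable_sq
  -- integrability of the kernel-weighted integrand
  have hInt : ∀ x : ℝ, Integrable (fun y => bbmK (x - y) * F y) volume := by
    intro x
    refine Integrable.mono'
      (g := fun y => u y ^ 2 / 2 + ((L:ℝ)^2 * Real.exp |x| / 4) * Real.exp (-|y|))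
      ((husq.div_const 2).add (integrable_exp_neg_abs'.const_mul _)) ?_ ?_
    · exact ((measurable_bbmK.comp (measurable_const.sub measurable_id)).aestronglyMeasurable.mul
        hFmeas)
    · refine Filter.Eventually.of_forall fun y => ?_
      have h1 : |bbmK (x - y)| ≤ Real.exp (-|x - y|) / 2 := abs_bbmK_le _
      have h2 : Real.exp (-|x - y|) ≤ Real.exp |x| * Real.exp (-|y|) := by
        rw [← Real.exp_add]
        apply Real.exp_le_exp.mpr
        have : |y| ≤ |x| + |x - y| := by
          calc |y| = |x - (x - y)| := by ring_nf
            _ ≤ |x| + |x - y| := abs_sub _ _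
        linarith
      have hKle : |bbmK (x - y)| ≤ 1 / 2 := by
        refine h1.trans ?_
        have : Real.exp (-|x - y|) ≤ 1 := Real.exp_le_one_iff.mpr (neg_nonpos.mpr (abs_nonneg _))
        linarith
      have hd2 : (deriv u y) ^ 2 ≤ (L:ℝ)^2 := by
        have := hderiv_le y
        nlinarith [abs_nonneg (deriv u y), sq_abs (deriv u y)]
      rw [norm_mul, Real.norm_eq_abs, norm_of_nonneg (hFnn y), hF]
      have t1 : |bbmK (x - y)| * u y ^ 2 ≤ (1/2) * u y ^ 2 :=
        mul_le_mul_of_nonneg_right hKle (sq_nonneg _)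
      have t2 : |bbmK (x - y)| * (deriv u y) ^ 2 ≤ (Real.exp (-|x - y|) / 2) * (L:ℝ)^2 :=
        mul_le_mul h1 hd2 (sq_nonneg _) (by positivity)
      have t3 : Real.exp (-|x - y|) * (L:ℝ)^2 ≤ (Real.exp |x| * Real.exp (-|y|)) * (L:ℝ)^2 :=
        mul_le_mul_of_nonneg_right h2 (sq_nonneg _)
      nlinarith [t1, t2, t3]
  -- rearrange hypothesis
  have hI : 0 ≤ ∫ y, (bbmK (x₁ - y) - bbmK (x₂ - y)) * F y := by
    have heq : ∫ y, (bbmK (x₁ - y) - bbmK (x₂ - y)) * F y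
        = (∫ y, bbmK (x₁ - y) * F y) - ∫ y, bbmK (x₂ - y) * F y := by
      rw [← integral_sub (hInt x₁) (hInt x₂)]
      simp only [sub_mul]
    rw [heq, sub_nonneg]
    linarith [hN]
  -- pointwise negativity of the kernel difference off [a,b]
  have hgneg : ∀ y : ℝ, y < a ∨ b < y → bbmK (x₁ - y) - bbmK (x₂ - y) < 0 := by
    intro y hy
    rcases hy with hy | hy
    · have h1 : 0 < x₁ - y := by linarith
      have h2 : 0 < x₂ - y := by linarith
      rw [show bbmK (x₁ - y) = -Real.exp (-(x₁ - y)) / 2 by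
            unfold bbmK; rw [Real.sign_of_pos h1, abs_of_pos h1]; ring,
          show bbmK (x₂ - y) = -Real.exp (-(x₂ - y)) / 2 by
            unfold bbmK; rw [Real.sign_of_pos h2, abs_of_pos h2]; ring]
      have : Real.exp (-(x₂ - y)) < Real.exp (-(x₁ - y)) := Real.exp_lt_exp.mpr (by linarith)
      linarith
    · have h1 : x₁ - y < 0 := by linarith
      have h2 : x₂ - y < 0 := by linarith
      rw [show bbmK (x₁ - y) = Real.exp (x₁ - y) / 2 by
            unfold bbmK; rw [Real.sign_of_neg h1, abs_of_neg h1, neg_neg]; ring,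
          show bbmK (x₂ - y) = Real.exp (x₂ - y) / 2 by
            unfold bbmK; rw [Real.sign_of_neg h2, abs_of_neg h2, neg_neg]; ring]
      have : Real.exp (x₁ - y) < Real.exp (x₂ - y) := Real.exp_lt_exp.mpr (by linarith)
      linarith
  -- F vanishes on the open interval
  have hF0 : ∀ y ∈ Set.Ioo a b, F y = 0 := by
    intro y hy
    have hu0 : u y = 0 := hz y (Set.Ioo_subset_Icc_self hy)
    have hd0 : deriv u y = 0 := by
      have hev : u =ᶠ[nhds y] fun _ => (0:ℝ) := by
        filter_upwards [Ioo_mem_nhds hy.1 hy.2] with z hz'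
        exact hz z (Set.Ioo_subset_Icc_self hz')
      rw [hev.deriv_eq, deriv_const]
    simp [hF, hu0, hd0]
  -- integrand is a.e. nonpositive
  have hae_not : ∀ᵐ y : ℝ ∂volume, y ∉ ({a, b} : Set ℝ) :=
    (((Set.finite_singleton b).insert a).countable).ae_notMem volume
  have hle : ∀ᵐ y : ℝ ∂volume, (bbmK (x₁ - y) - bbmK (x₂ - y)) * F y ≤ 0 := by
    filter_upwards [hae_not] with y hy
    rcases lt_trichotomy y a with h | h | h
    · exact mul_nonpos_iff.mpr (Or.inr ⟨(hgneg y (Or.inl h)).le, hFnn y⟩)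
    · exact absurd (by simp [h]) hy
    · rcases lt_trichotomy y b with h' | h' | h'
      · rw [hF0 y ⟨h, h'⟩, mul_zero]
      · exact absurd (by simp [h']) hy
      · exact mul_nonpos_iff.mpr (Or.inr ⟨(hgneg y (Or.inr h')).le, hFnn y⟩)
  have hIntDiff : Integrable (fun y => (bbmK (x₁ - y) - bbmK (x₂ - y)) * F y) volume := by
    have := (hInt x₁).sub (hInt x₂)
    refine this.congr (Filter.Eventually.of_forall fun y => ?_)
    simp only [Pi.sub_apply]
    ring
  -- conclude integrand is a.e. zero
  have hzero : ∀ᵐ y : ℝ ∂volume, (bbmK (x₁ - y) - bbmK (x₂ - y)) * F y = 0 := by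
    have hint0 : ∫ y, (bbmK (x₁ - y) - bbmK (x₂ - y)) * F y = 0 :=
      le_antisymm (integral_nonpos_of_ae hle) hI
    have hneg : (0:ℝ → ℝ) ≤ᵐ[volume] fun y => -((bbmK (x₁ - y) - bbmK (x₂ - y)) * F y) := by
      filter_upwards [hle] with y hy; simpa using hy
    have hni : Integrable (fun y => -((bbmK (x₁ - y) - bbmK (x₂ - y)) * F y)) volume :=
      hIntDiff.neg
    have : ∫ y, -((bbmK (x₁ - y) - bbmK (x₂ - y)) * F y) = 0 := by
      rw [integral_neg, hint0, neg_zero]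
    have := (integral_eq_zero_iff_of_nonneg_ae hneg hni).mp this
    filter_upwards [this] with y hy
    have : -((bbmK (x₁ - y) - bbmK (x₂ - y)) * F y) = 0 := hy
    linarith
  -- u = 0 a.e.
  have hu0ae : u =ᵐ[volume] fun _ => (0:ℝ) := by
    filter_upwards [hzero] with y hy
    by_cases hmem : y ∈ Set.Icc a b
    · exact hz y hmem
    · have hy' : y < a ∨ b < y := by
        rcases not_and_or.mp (fun h => hmem ⟨h.1, h.2⟩) with h | h
        · exact Or.inl (lt_of_not_ge h)
        · exact Or.inr (lt_of_not_ge h)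
      have hg := hgneg y hy'
      have hFy : F y = 0 := by
        rcases mul_eq_zero.mp hy with h | h
        · exact absurd h hg.ne
        · exact h
      have hFy' : u y ^ 2 + (deriv u y) ^ 2 / 2 = 0 := hFy
      have h1 : u y ^ 2 = 0 := by nlinarith [sq_nonneg (u y), sq_nonneg (deriv u y)]
      exact (pow_eq_zero_iff (by norm_num : (2:ℕ) ≠ 0)).mp h1
  -- continuity concludes
  have := (Continuous.ae_eq_iff_eq volume hLip.continuous continuous_const).mp hu0ae
  intro x
  exact congrFun this x
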